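/- arXiv:1402.5361 — 2 statements merged into one kernel-verified Lean document; each statement's English description precedes it below -/
import Mathlib

section
/- Let d and s be integers with 7 ≤ ⌊d/2⌋ + 1 ≤ s ≤ d - 4, and set g_s(d) = C(s-1, 2) + C(d-s, 2). Then every finite O-sequence h of multiplicity d and length s with h ≠ (1, 2^{d-s}, 1^{2s-d-1}) satisfies g(h) ≤ g_s(d) - (d - s - 2). In particular, none of the integers g_s(d) - (d-s-3), g_s(d) - (d-s-4), …, g_s(d) - 1 is the genus of a finite O-sequence of multiplicity d and length s. -/
/-- The Macaulay bound `a^⟨t⟩`: if `a = C(k_t,t) + C(k_{t-1},t-1) + ⋯ + C(k_j,j)` is the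
binomial expansion of `a` in base `t`, then `a^⟨t⟩ = C(k_t+1,t+1) + ⋯ + C(k_j+1,j+1)`.
Computed greedily; `mac t a = a^⟨t⟩` for `t ≥ 1`. -/
def mac : ℕ → ℕ → ℕ
  | 0, _ => 0
  | t+1, a =>
    if a = 0 then 0
    else
      Nat.choose (Nat.findGreatest (fun n => Nat.choose n (t+1) ≤ a) (a + t + 1) + 1) (t+2) +
        mac t (a - Nat.choose (Nat.findGreatest (fun n => Nat.choose n (t+1) ≤ a) (a + t + 1)) (t+1))

/-- `h : ℕ → ℕ` is a finite O-sequence of length `s`: `h 0 = 1`, the entries `h 0, …, h (s-1)`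
are positive, entries from index `s` on are zero, and `h (t+1) ≤ (h t)^⟨t⟩` for all `t ≥ 1`. -/
def IsOSeq (h : ℕ → ℕ) (s : ℕ) : Prop :=
  h 0 = 1 ∧ (∀ i, 0 < h i ↔ i < s) ∧ ∀ t, 1 ≤ t → h (t + 1) ≤ mac t (h t)

/-- The multiplicity `e(h) = h_0 + ⋯ + h_{s-1}` of a finite O-sequence of length `s`. -/
def mult (h : ℕ → ℕ) (s : ℕ) : ℕ := ∑ i ∈ Finset.range s, h i

/-- The genus `g(h) = Σ_{j=2}^{s-1} (j-1)·h_j` of a finite O-sequence of length `s`. -/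
def genus (h : ℕ → ℕ) (s : ℕ) : ℕ := ∑ j ∈ Finset.range s, (j - 1) * h j

/-- The sequence obtained from `h` by increasing the `i`-th entry by `1`, i.e. `h + e_i`. -/
def addE (h : ℕ → ℕ) (i : ℕ) : ℕ → ℕ := fun j => if j = i then h j + 1 else h j

/-- The sequence obtained from `h` by decreasing the `i`-th entry by `1`, i.e. `h - e_i`. -/
def subE (h : ℕ → ℕ) (i : ℕ) : ℕ → ℕ := fun j => if j = i then h j - 1 else h j

/-- The total order on finite O-sequences of the same length: `oLT h k` iff `h_ℓ < k_ℓ`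
where `ℓ = max{ j : h_j ≠ k_j }`. -/
def oLT (h k : ℕ → ℕ) : Prop := ∃ ℓ, h ℓ < k ℓ ∧ ∀ j, ℓ < j → h j = k j

/-- The set of genera of finite O-sequences of multiplicity `d` and length `s`. -/
def genusSet (d s : ℕ) : Set ℕ := {g | ∃ h, IsOSeq h s ∧ mult h s = d ∧ genus h s = g}

/-- `G_d`: the set of genera of finite O-sequences of multiplicity `d` (of any length). -/
def GSet (d : ℕ) : Set ℕ := {g | ∃ h s, IsOSeq h s ∧ mult h s = d ∧ genus h s = g}

/-- `g` is a gap in `R_d = [0, C(d-1,2)]`: it lies in the range but is not the genus of any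
finite O-sequence of multiplicity `d`. -/
def IsGap (d g : ℕ) : Prop :=
  g ≤ Nat.choose (d - 1) 2 ∧ ∀ h s, IsOSeq h s → mult h s = d → genus h s ≠ g

/-- The O-sequence `(1, d-s+1, 1^{s-2})`, minimal in `𝒢_d^s`. -/
def minSeq (d s : ℕ) : ℕ → ℕ :=
  fun j => if j = 0 then 1 else if j = 1 then d - s + 1 else if j < s then 1 else 0

/-- The O-sequence `(1, 2^{d-s}, 1^{2s-d-1})`, maximal in `𝒢_d^s`. -/
def maxSeq (d s : ℕ) : ℕ → ℕ :=
  fun j => if j = 0 then 1 else if j ≤ d - s then 2 else if j < s then 1 else 0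

/-- The O-sequence `(1, d-1)`. -/
def twoSeq (d : ℕ) : ℕ → ℕ := fun j => if j = 0 then 1 else if j = 1 then d - 1 else 0

/-- The operation `h ↦ h - e_{s-1} + e_1` on a sequence of length `s`. -/
def downUp (h : ℕ → ℕ) (s : ℕ) : ℕ → ℕ :=
  fun j => if j = s - 1 then h j - 1 else if j = 1 then h j + 1 else h j

/-- The largest index `1 ≤ j ≤ s-1` with `h j > 1` (and `0` if there is none). -/
def topIdx (h : ℕ → ℕ) (s : ℕ) : ℕ := Nat.findGreatest (fun j => 1 < h j) (s - 1)

/-- The operation `h ↦ h - e_i + e_1` where `i = topIdx h s`. -/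
def shiftDown (h : ℕ → ℕ) (s : ℕ) : ℕ → ℕ :=
  fun j => if j = topIdx h s then h j - 1 else if j = 1 then h j + 1 else h j

/-- Auxiliary list `[m_n, m_{n-1}, …, m_1]` for the recursively defined sequence `(m_d)`. -/
def mListAux : ℕ → List ℕ
  | 0 => []
  | n+1 =>
    let prev := mListAux n
    let newVal :=
      if n = 0 then 0
      else
        (List.range' 2 (n - 1)).foldl
          (fun M k =>
            if Nat.choose k 2 - 1 ≤ M then max M (prev.getD (k - 1) 0 + Nat.choose k 2) else M)
          (prev.getD 0 0)
    newVal :: prev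

/-- The sequence `(m_d)_{d ≥ 1}`: `m_1 = 0` and, for `d ≥ 2`, `m_d` is obtained from
`M := m_{d-1}` by running over `k = 2, …, d-1` and replacing `M` by
`max M (m_{d-k} + C(k,2))` whenever `C(k,2) - 1 ≤ M`. -/
def mSeq (d : ℕ) : ℕ := (mListAux d).getD 0 0

lemma mac_zero (t : ℕ) : mac t 0 = 0 := by cases t <;> simp [mac]

lemma mac_one (t : ℕ) (ht : 1 ≤ t) : mac t 1 = 1 := by
  obtain ⟨u, rfl⟩ : ∃ u, t = u + 1 := ⟨t - 1, by omega⟩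
  have hfg : Nat.findGreatest (fun n => Nat.choose n (u+1) ≤ 1) (1 + u + 1) = u + 1 := by
    rw [Nat.findGreatest_eq_iff]
    refine ⟨by omega, fun _ => by simp, fun n hn hn2 => ?_⟩
    have h2 : (u+2).choose (u+1) ≤ n.choose (u+1) := Nat.choose_le_choose _ (by omega)
    rw [Nat.choose_succ_self_right] at h2
    omega
  simp only [mac, if_neg one_ne_zero, hfg, Nat.choose_self, Nat.sub_self, mac_zero]

lemma mac_two (t : ℕ) (ht : 2 ≤ t) : mac t 2 = 2 := by
  obtain ⟨u, rfl⟩ : ∃ u, t = u + 2 := ⟨t - 2, by omega⟩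
  have hfg : Nat.findGreatest (fun n => Nat.choose n (u+2) ≤ 2) (2 + (u + 1) + 1) = u + 2 := by
    rw [Nat.findGreatest_eq_iff]
    refine ⟨by omega, fun _ => by simp, fun n hn hn2 => ?_⟩
    have h2 : (u+3).choose (u+2) ≤ n.choose (u+2) := Nat.choose_le_choose _ (by omega)
    rw [Nat.choose_succ_self_right] at h2
    omega
  have : mac (u+2) 2 = Nat.choose (u+2+1) (u+3) + mac (u+1) (2 - Nat.choose (u+2) (u+2)) := by
    simp only [mac, if_neg (by norm_num : (2:ℕ) ≠ 0), hfg]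
  rw [this, Nat.choose_self, Nat.choose_self]
  norm_num [mac_one]

lemma two_mul_choose_two (n : ℕ) : 2 * n.choose 2 = n * (n - 1) := by
  induction n with
  | zero => simp
  | succ k ih =>
    have hp : (k+1).choose 2 = k.choose 1 + k.choose 2 := Nat.choose_succ_succ k 1
    rw [hp, Nat.choose_one_right, Nat.mul_add, ih]
    cases k with
    | zero => simp
    | succ p => simp only [Nat.succ_sub_one, Nat.add_sub_cancel]; ring

lemma sum_range_sub_one (n : ℕ) : ∑ j ∈ Finset.range n, (j - 1) = Nat.choose (n-1) 2 := by
  induction n with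
  | zero => simp
  | succ k ih =>
    rw [Finset.sum_range_succ, ih]
    rcases k with _ | p
    · simp
    · simp only [Nat.succ_sub_one, Nat.add_sub_cancel]
      have hp : (p+1).choose 2 = p.choose 1 + p.choose 2 := Nat.choose_succ_succ p 1
      rw [hp, Nat.choose_one_right]
      omega

lemma sum_Ico_sub_one (n : ℕ) : ∑ j ∈ Finset.Ico 1 (n+1), (j-1) = Nat.choose n 2 := by
  have h : ∑ j ∈ Finset.Ico 1 (n+1), (j-1) = ∑ j ∈ Finset.range (n+1), (j-1) := by
    apply Finset.sum_subset
    · intro x hx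
      simp only [Finset.mem_Ico] at hx
      simp only [Finset.mem_range]; omega
    · intro x hx hnx
      simp only [Finset.mem_range] at hx
      simp only [Finset.mem_Ico] at hnx
      omega
  rw [h, sum_range_sub_one]; simp

lemma arith_key (a b g : ℕ) (hab : 3 ≤ a + b) (hb : 1 ≤ b)
    (h1 : g ≤ a * b) (h2 : g ≤ b * b) :
    Nat.choose (a+1) 2 + g ≤ Nat.choose (a+b) 2 + 1 := by
  obtain ⟨k, hk⟩ : ∃ k, a + b = k + 1 := ⟨a + b - 1, by omega⟩
  have c1 : 2 * Nat.choose (a+1) 2 = (a+1) * a := by rw [two_mul_choose_two]; simp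
  have c2 : 2 * Nat.choose (a+b) 2 = (k+1) * k := by rw [two_mul_choose_two, hk]; simp
  have key : (a+1) * a + 2 * g ≤ (k+1) * k + 2 := by
    rcases le_or_gt a b with hcase | hcase
    · nlinarith [h1, hk, hb, hab, hcase]
    · nlinarith [h2, hk, hb, hab, hcase]
  omega

lemma genus_maxSeq (d s : ℕ) (h2 : d - s + 1 ≤ s) :
    genus (maxSeq d s) s = Nat.choose (s-1) 2 + Nat.choose (d-s) 2 := by
  unfold genus maxSeq
  have e1 : ∀ j ∈ Finset.range s,
      (j-1) * (if j = 0 then 1 else if j ≤ d - s then 2 else if j < s then 1 else 0)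
      = (j-1) + (if j ∈ Finset.Ico 1 (d-s+1) then j-1 else 0) := by
    intro j hj
    simp only [Finset.mem_range] at hj
    simp only [Finset.mem_Ico]
    split_ifs <;> omega
  rw [Finset.sum_congr rfl e1, Finset.sum_add_distrib, sum_range_sub_one,
    Finset.sum_ite_mem, Finset.inter_eq_right.mpr, sum_Ico_sub_one]
  intro x hx
  simp only [Finset.mem_Ico] at hx
  simp only [Finset.mem_range]
  omega

lemma sub_two_le_choose_two (r : ℕ) : r - 2 ≤ r.choose 2 := by
  induction r with
  | zero => simp
  | succ n ih =>
    have hp : (n+1).choose 2 = n.choose 1 + n.choose 2 := Nat.choose_succ_succ n 1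
    rw [hp, Nat.choose_one_right]
    omega


lemma main_bound (d s : ℕ) (hs7 : 7 ≤ s) (hr4 : 4 ≤ d - s)
    (hrs : d - s + 1 ≤ s) (hsd : s ≤ d)
    (h : ℕ → ℕ) (hO : IsOSeq h s) (hmult : mult h s = d) (hne : h ≠ maxSeq d s) :
    genus h s ≤ Nat.choose (s-1) 2 + Nat.choose (d-s) 2 - (d - s - 2) := by
  obtain ⟨h0, hpos, hmac⟩ := hO
  set r := d - s with hrdef
  have hp : ∀ j, j < s → 1 ≤ h j := fun j hj => (hpos j).2 hj
  have hz : ∀ j, s ≤ j → h j = 0 := by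
    intro j hj
    by_contra hc
    have := (hpos j).1 (Nat.pos_of_ne_zero hc)
    omega
  -- descent lemmas
  have desc2 : ∀ k, k < s → 2 ≤ h k → ∀ j, 1 ≤ j → j ≤ k → 2 ≤ h j := by
    intro k
    induction k with
    | zero => intro _ _ j hj1 hj2; omega
    | succ k ih =>
      intro hks hk2 j hj1 hj2
      rcases eq_or_lt_of_le hj2 with rfl | hlt
      · exact hk2
      · have hjk : j ≤ k := by omega
        have hk1 : 1 ≤ k := le_trans hj1 hjk
        have h2k : 2 ≤ h k := by
          by_contra hc
          have hk1' : h k = 1 := by have := hp k (by omega); omega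
          have hm := hmac k hk1
          rw [hk1', mac_one k hk1] at hm
          omega
        exact ih (by omega) h2k j hj1 hjk
  have desc3 : ∀ k, k < s → 3 ≤ h k → ∀ j, 2 ≤ j → j ≤ k → 3 ≤ h j := by
    intro k
    induction k with
    | zero => intro _ _ j hj1 hj2; omega
    | succ k ih =>
      intro hks hk2 j hj1 hj2
      rcases eq_or_lt_of_le hj2 with rfl | hlt
      · exact hk2
      · have hjk : j ≤ k := by omega
        have hk1 : 2 ≤ k := le_trans hj1 hjk
        have h3k : 3 ≤ h k := by
          by_contra hc
          have hm := hmac k (by omega)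
          have hk1' : h k = 1 ∨ h k = 2 := by have := hp k (by omega); omega
          rcases hk1' with hv | hv <;> rw [hv] at hm
          · rw [mac_one k (by omega)] at hm; omega
          · rw [mac_two k hk1] at hm; omega
        exact ih (by omega) h3k j hj1 hjk
  set m := Nat.findGreatest (fun j => 2 ≤ h j) (s-1) with hmdef
  set c := Nat.findGreatest (fun j => 3 ≤ h j) (s-1) with hcdef
  have hms : m ≤ s - 1 := Nat.findGreatest_le (s-1)
  have hcs : c ≤ s - 1 := Nat.findGreatest_le (s-1)
  have hmgr : ∀ j, m < j → j ≤ s - 1 → h j ≤ 1 := by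
    intro j hj1 hj2
    have := Nat.findGreatest_is_greatest (P := fun j => 2 ≤ h j) hj1 hj2
    omega
  have hcgr : ∀ j, c < j → j ≤ s - 1 → h j ≤ 2 := by
    intro j hj1 hj2
    have := Nat.findGreatest_is_greatest (P := fun j => 3 ≤ h j) hj1 hj2
    omega
  -- excess sum
  have hE : ∑ j ∈ Finset.range s, (h j - 1) = r := by
    have e1 : ∑ j ∈ Finset.range s, h j = ∑ j ∈ Finset.range s, ((h j - 1) + 1) := by
      apply Finset.sum_congr rfl
      intro j hj
      have := hp j (Finset.mem_range.mp hj)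
      omega
    unfold mult at hmult
    rw [hmult, Finset.sum_add_distrib, Finset.sum_const, Finset.card_range, smul_eq_mul,
      mul_one] at e1
    omega
  -- m is at least 1 and h m >= 2
  have hwit : ∃ j, j < s ∧ 2 ≤ h j := by
    by_contra hc
    push_neg at hc
    have hall : ∀ j ∈ Finset.range s, h j - 1 = 0 := by
      intro j hj
      have := hc j (Finset.mem_range.mp hj)
      omega
    rw [Finset.sum_eq_zero hall] at hE
    omega
  obtain ⟨w, hws, hw2⟩ := hwit
  have hw1 : 1 ≤ w := by
    by_contra hc
    have : w = 0 := by omega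
    rw [this, h0] at hw2; omega
  have hm1 : 1 ≤ m := le_trans hw1 (Nat.le_findGreatest (by omega) hw2)
  have hm2 : 2 ≤ h m := Nat.findGreatest_spec (P := fun j => 2 ≤ h j) (by omega : w ≤ s - 1) hw2
  have hEm : ∀ j, 1 ≤ j → j ≤ m → 2 ≤ h j := fun j ha hb => desc2 m (by omega) hm2 j ha hb
  -- restrict sums to I = Ico 1 (m+1)
  have hIsub : Finset.Ico 1 (m+1) ⊆ Finset.range s := by
    intro x hx
    simp only [Finset.mem_Ico] at hx
    simp only [Finset.mem_range]
    omega
  have hvanish : ∀ j ∈ Finset.range s, j ∉ Finset.Ico 1 (m+1) → h j - 1 = 0 := by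
    intro j hj hnj
    simp only [Finset.mem_range] at hj
    simp only [Finset.mem_Ico] at hnj
    rcases Nat.eq_zero_or_pos j with rfl | hj1
    · omega
    · have := hmgr j (by omega) (by omega)
      omega
  have hEI : ∑ j ∈ Finset.Ico 1 (m+1), (h j - 1) = r := by
    rw [← hE]
    exact Finset.sum_subset hIsub hvanish
  have hmr : m ≤ r := by
    have h1 : ∑ j ∈ Finset.Ico 1 (m+1), 1 ≤ ∑ j ∈ Finset.Ico 1 (m+1), (h j - 1) := by
      apply Finset.sum_le_sum
      intro j hj
      simp only [Finset.mem_Ico] at hj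
      have := hEm j (by omega) (by omega)
      omega
    rw [hEI, Finset.sum_const, Nat.card_Ico, smul_eq_mul, mul_one] at h1
    omega
  -- genus decomposition
  have hgen : genus h s = Nat.choose (s-1) 2 + ∑ j ∈ Finset.range s, (j-1)*(h j - 1) := by
    unfold genus
    have e1 : ∀ j ∈ Finset.range s, (j-1) * h j = (j-1) + (j-1)*(h j - 1) := by
      intro j hj
      have h1 := hp j (Finset.mem_range.mp hj)
      obtain ⟨v, hv⟩ : ∃ v, h j = v + 1 := ⟨h j - 1, by omega⟩
      rw [hv, Nat.add_sub_cancel, Nat.mul_add, Nat.mul_one, Nat.add_comm]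
    rw [Finset.sum_congr rfl e1, Finset.sum_add_distrib, sum_range_sub_one]
  have hGI : ∑ j ∈ Finset.range s, (j-1)*(h j - 1) = ∑ j ∈ Finset.Ico 1 (m+1), (j-1)*(h j - 1) := by
    symm
    apply Finset.sum_subset hIsub
    intro j hj hnj
    rw [hvanish j hj hnj, Nat.mul_zero]
  have hGsplit : ∑ j ∈ Finset.Ico 1 (m+1), (j-1)*(h j - 1)
      = Nat.choose m 2 + ∑ j ∈ Finset.Ico 1 (m+1), (j-1)*(h j - 2) := by
    have e1 : ∀ j ∈ Finset.Ico 1 (m+1), (j-1)*(h j - 1) = (j-1) + (j-1)*(h j - 2) := by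
      intro j hj
      simp only [Finset.mem_Ico] at hj
      have h2 := hEm j (by omega) (by omega)
      have : h j - 1 = 1 + (h j - 2) := by omega
      rw [this, Nat.mul_add, Nat.mul_one]
    rw [Finset.sum_congr rfl e1, Finset.sum_add_distrib, sum_Ico_sub_one]
  set G2 := ∑ j ∈ Finset.Ico 1 (m+1), (j-1)*(h j - 2) with hG2def
  have hFsum : ∑ j ∈ Finset.Ico 1 (m+1), (h j - 2) = r - m := by
    have e1 : ∀ j ∈ Finset.Ico 1 (m+1), h j - 1 = (h j - 2) + 1 := by
      intro j hj
      simp only [Finset.mem_Ico] at hj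
      have := hEm j (by omega) (by omega)
      omega
    rw [Finset.sum_congr rfl e1, Finset.sum_add_distrib, Finset.sum_const, Nat.card_Ico,
      smul_eq_mul, mul_one] at hEI
    omega
  -- bound 1 : G2 ≤ (m-1) * (r-m)
  have hB1 : G2 ≤ (m-1) * (r-m) := by
    calc G2 ≤ ∑ j ∈ Finset.Ico 1 (m+1), (m-1)*(h j - 2) := by
          apply Finset.sum_le_sum
          intro j hj
          simp only [Finset.mem_Ico] at hj
          exact Nat.mul_le_mul_right _ (by omega)
      _ = (m-1) * (r-m) := by rw [← Finset.mul_sum, hFsum]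
  -- bound 2 : G2 ≤ (r-m) * (r-m)
  have hB2 : G2 ≤ (r-m) * (r-m) := by
    by_cases hc2 : 2 ≤ c
    · have hc3 : 3 ≤ h c := (Nat.findGreatest_eq_iff.mp hcdef.symm).2.1 (by omega)
      have hcm : c ≤ m := Nat.le_findGreatest (by omega) (by omega)
      have hF3 : ∀ j, 2 ≤ j → j ≤ c → 3 ≤ h j := fun j ha hb => desc3 c (by omega) hc3 j ha hb
      have hc1 : c - 1 ≤ r - m := by
        have hsub2 : Finset.Ico 2 (c+1) ⊆ Finset.Ico 1 (m+1) := by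
          intro x hx
          simp only [Finset.mem_Ico] at hx ⊢
          omega
        have e1 : ∑ j ∈ Finset.Ico 2 (c+1), 1 ≤ ∑ j ∈ Finset.Ico 2 (c+1), (h j - 2) := by
          apply Finset.sum_le_sum
          intro j hj
          simp only [Finset.mem_Ico] at hj
          have := hF3 j (by omega) (by omega)
          omega
        have e2 : ∑ j ∈ Finset.Ico 2 (c+1), (h j - 2) ≤ ∑ j ∈ Finset.Ico 1 (m+1), (h j - 2) :=
          Finset.sum_le_sum_of_subset hsub2
        rw [Finset.sum_const, Nat.card_Ico, smul_eq_mul, mul_one] at e1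
        omega
      calc G2 ≤ ∑ j ∈ Finset.Ico 1 (m+1), (c-1)*(h j - 2) := by
            apply Finset.sum_le_sum
            intro j hj
            simp only [Finset.mem_Ico] at hj
            by_cases h3 : 3 ≤ h j
            · have hjc : j ≤ c := Nat.le_findGreatest (by omega) h3
              exact Nat.mul_le_mul_right _ (by omega)
            · have hz2 : h j - 2 = 0 := by omega
              rw [hz2, Nat.mul_zero, Nat.mul_zero]
        _ = (c-1) * (r-m) := by rw [← Finset.mul_sum, hFsum]
        _ ≤ (r-m) * (r-m) := Nat.mul_le_mul_right _ hc1
    · -- c ≤ 1 : G2 = 0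
      have hG20 : G2 = 0 := by
        apply Finset.sum_eq_zero
        intro j hj
        simp only [Finset.mem_Ico] at hj
        rcases eq_or_lt_of_le (hj.1 : 1 ≤ j) with heq | hj2
        · rw [← heq]
          simp
        · have h1 := hcgr j (by omega) (by omega)
          have : h j - 2 = 0 := by omega
          rw [this, Nat.mul_zero]
      omega
  -- case split on m = r
  rcases eq_or_lt_of_le hmr with hmeq | hmlt
  · -- h = maxSeq, contradiction
    exfalso
    apply hne
    have heq1 : ∀ j ∈ Finset.Ico 1 (m+1), h j - 1 = 1 := by
      have hsum0 : ∑ j ∈ Finset.Ico 1 (m+1), ((h j - 1) - 1) = 0 := by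
        have e1 : ∀ j ∈ Finset.Ico 1 (m+1), h j - 1 = ((h j - 1) - 1) + 1 := by
          intro j hj
          simp only [Finset.mem_Ico] at hj
          have := hEm j (by omega) (by omega)
          omega
        rw [Finset.sum_congr rfl e1, Finset.sum_add_distrib, Finset.sum_const, Nat.card_Ico,
          smul_eq_mul, mul_one] at hEI
        omega
      intro j hj
      have hz1 := Finset.sum_eq_zero_iff.mp hsum0 j hj
      simp only [Finset.mem_Ico] at hj
      have := hEm j (by omega) (by omega)
      omega
    funext j
    unfold maxSeq
    by_cases hj0 : j = 0
    · simp [hj0, h0]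
    · by_cases hjr : j ≤ d - s
      · have hjI : j ∈ Finset.Ico 1 (m+1) := by
          simp only [Finset.mem_Ico]
          omega
        have hv1 := heq1 j hjI
        simp only [Finset.mem_Ico] at hjI
        have h2 := hEm j (by omega) (by omega)
        simp only [if_neg hj0, if_pos hjr]
        omega
      · by_cases hjs : j < s
        · have hle := hmgr j (by omega) (by omega)
          have := hp j hjs
          simp only [if_neg hj0, if_neg hjr, if_pos hjs]
          omega
        · simp only [if_neg hj0, if_neg hjr, if_neg hjs]
          exact hz j (by omega)
  -- main case : m ≤ r - 1
  · have harith : Nat.choose m 2 + G2 ≤ Nat.choose (r-1) 2 + 1 := by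
      have hk := arith_key (m-1) (r-m) G2 (by omega) (by omega)
        hB1 hB2
      have hm' : m - 1 + 1 = m := by omega
      have hr' : m - 1 + (r - m) = r - 1 := by omega
      rw [hm', hr'] at hk
      exact hk
    have hpascal : Nat.choose r 2 = Nat.choose (r-1) 2 + (r-1) := by
      obtain ⟨p, hpeq⟩ : ∃ p, r = p + 1 := ⟨r - 1, by omega⟩
      rw [hpeq]
      have hp2 : (p+1).choose 2 = p.choose 1 + p.choose 2 := Nat.choose_succ_succ p 1
      rw [hp2, Nat.choose_one_right, Nat.add_sub_cancel]
      omega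
    rw [hgen, hGI, hGsplit]
    omega

/-- Let `7 ≤ ⌊d/2⌋ + 1 ≤ s ≤ d - 4` and `g_s(d) = C(s-1,2) + C(d-s,2)`.
Then every finite O-sequence of multiplicity `d` and length `s` other than
`(1, 2^{d-s}, 1^{2s-d-1})` has genus at most `g_s(d) - (d-s-2)`; in particular none of the
integers `g_s(d) - i` for `1 ≤ i ≤ d-s-3` is the genus of a finite O-sequence of
multiplicity `d` and length `s`. -/
theorem stmt12 (d s : ℕ) (h7 : 7 ≤ d / 2 + 1) (hs1 : d / 2 + 1 ≤ s) (hs2 : s ≤ d - 4) :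
    (∀ h : ℕ → ℕ, IsOSeq h s → mult h s = d → h ≠ maxSeq d s →
      genus h s ≤ Nat.choose (s - 1) 2 + Nat.choose (d - s) 2 - (d - s - 2)) ∧
    (∀ i, 1 ≤ i → i ≤ d - s - 3 →
      ∀ h : ℕ → ℕ, IsOSeq h s → mult h s = d →
        genus h s ≠ Nat.choose (s - 1) 2 + Nat.choose (d - s) 2 - i) := by
  have hd : 12 ≤ d := by omega
  have hs7 : 7 ≤ s := by omega
  have hr4 : 4 ≤ d - s := by omega
  have hrs : d - s + 1 ≤ s := by omega
  have hsd : s ≤ d := by omega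
  constructor
  · intro h hO hmult hne
    exact main_bound d s hs7 hr4 hrs hsd h hO hmult hne
  · intro i hi1 hi2 h hO hmult hgen
    have hCr := sub_two_le_choose_two (d - s)
    by_cases hne : h = maxSeq d s
    · rw [hne, genus_maxSeq d s hrs] at hgen
      have hpos : 0 < Nat.choose (s-1) 2 := Nat.choose_pos (by omega)
      omega
    · have hb := main_bound d s hs7 hr4 hrs hsd h hO hmult hne
      omega
end

section
/- Let d and s be integers with 7 ≤ ⌊d/2⌋ + 1 ≤ s ≤ d - 4, set g_s(d) = C(s-1, 2) + C(d-s, 2), and let 1 ≤ i ≤ d - s - 3. If s - 1 - C(d-s, 2) + i > 0, then the integer g_s(d) - i is a gap in R_d. -/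
lemma two_choose_two (n : ℕ) : 2 * Nat.choose n 2 = n * (n - 1) := by
  induction n with
  | zero => simp
  | succ m ih =>
    rw [Nat.choose_succ_succ, Nat.choose_one_right, Nat.mul_add, ih]
    cases m with
    | zero => simp
    | succ t => simp [Nat.succ_sub_one]; ring

lemma mac_self : ∀ t a : ℕ, a ≤ t → mac t a = a := by
  intro t
  induction t with
  | zero => intro a ha; interval_cases a; simp [mac]
  | succ t ih =>
    intro a ha
    rcases Nat.eq_zero_or_pos a with rfl | hpos
    · exact mac_zero _
    have hfg : Nat.findGreatest (fun n => Nat.choose n (t+1) ≤ a) (a + t + 1) = t + 1 := by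
      rw [Nat.findGreatest_eq_iff]
      refine ⟨by omega, fun _ => by simpa using (show 1 ≤ a by omega), fun n hn hnb => ?_⟩
      have h1 : t + 2 ≤ Nat.choose n (t+1) := by
        calc t + 2 = Nat.choose (t+2) (t+1) := by rw [Nat.choose_succ_self_right]
          _ ≤ Nat.choose n (t+1) := Nat.choose_le_choose _ (by omega)
      omega
    show (if a = 0 then 0 else _) = a
    rw [if_neg (by omega), hfg, Nat.choose_self]
    rcases Nat.eq_zero_or_pos t with rfl | ht
    · have : a = 1 := by omega
      subst this
      simp [mac_zero]
    · rw [Nat.choose_self, ih (a-1) (by omega)]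
      omega

lemma keyA (E i k : ℤ) (hi : 1 ≤ i) (hiE : i + 3 ≤ E) (h0 : 0 ≤ k) (hk : k ≤ E) :
    k*(k-1) ≠ E*(E-1) - 2*i := by
  intro heq
  rcases eq_or_lt_of_le hk with rfl | hlt
  · linarith
  · nlinarith [mul_nonneg (show (0:ℤ) ≤ E-1-k by omega) (show (0:ℤ) ≤ E-2+k by omega)]

lemma keyB (E m k S : ℤ) (h2 : 2 ≤ m) (hmk : m ≤ k) (hS : 0 ≤ S) (hsum : m + k + S ≤ E + 1) :
    k*(k-1) + m*(m-1) + 2*(m-1)*S ≤ (E-1)*(E-2) + 2 := by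
  nlinarith [mul_nonneg hS (show (0:ℤ) ≤ k - m + 1 by omega), sq_nonneg (k+S+m-E-1),
    mul_nonneg (show (0:ℤ) ≤ m - 2 by omega) (show (0:ℤ) ≤ E+1-2*m by nlinarith),
    mul_nonneg (show (0:ℤ) ≤ E+1-m-k-S by omega) (show (0:ℤ) ≤ k+S-m by omega),
    mul_nonneg (show (0:ℤ) ≤ E+1-m-k-S by omega) (show (0:ℤ) ≤ m-2 by omega),
    mul_nonneg hS hS, mul_nonneg hS (show (0:ℤ) ≤ m-2 by omega)]

lemma keyC0 (s E i x k : ℤ) (hsbig : E+i+3 ≤ s) (hi : 1 ≤ i) (hiE : i+3 ≤ E)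
    (hk0 : 0 ≤ k) (hkx : k ≤ x) (hx : x ≤ s-2) (hsum : k + x + 1 ≤ s+E) :
    x*(x-1) + k*(k-1) < (s-1)*(s-2) + E*(E-1) - 2*i := by
  nlinarith [mul_nonneg (show (0:ℤ) ≤ s-2-x by omega) (show (0:ℤ) ≤ x-k by omega),
    mul_nonneg (show (0:ℤ) ≤ s-2-x by omega) (show (0:ℤ) ≤ s+E-1-k-x by omega),
    mul_nonneg (show (0:ℤ) ≤ x-k by omega) (show (0:ℤ) ≤ s+E-1-k-x by omega),
    sq_nonneg (s-E-1), sq_nonneg (x-k), sq_nonneg (s-2-x), sq_nonneg (s+E-1-k-x),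
    mul_nonneg (show (0:ℤ) ≤ s-2-x by omega) (show (0:ℤ) ≤ s-2-x by omega)]

lemma keyC2 (s E i x k m S : ℤ) (hsbig : E+i+3 ≤ s) (hi : 1 ≤ i) (hiE : i+3 ≤ E)
    (h2 : 2 ≤ m) (hmk : m ≤ k) (hkx : k ≤ x) (hx : x ≤ s-2)
    (hS : 0 ≤ S) (hsum : m + k + S + x ≤ s+E) :
    x*(x-1) + k*(k-1) + m*(m-1) + 2*(m-1)*S < (s-1)*(s-2) + E*(E-1) - 2*i := by
  have A1 : m*(m-1) + 2*(m-1)*S ≤ (k-1)*(m+2*S) := by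
    nlinarith [mul_nonneg (show (0:ℤ) ≤ k-m by omega) (show (0:ℤ) ≤ m by omega),
      mul_nonneg (show (0:ℤ) ≤ k-m by omega) hS]
  have A2 : (k-1)*(m+2*S) ≤ 2*(k-1)*(s+E-k-x-1) := by
    nlinarith [mul_nonneg (show (0:ℤ) ≤ k-1 by omega)
      (show (0:ℤ) ≤ 2*(s+E-k-x-1) - (m+2*S) by omega)]
  have hq : x*(x-1) + k*(k-1) + 2*(k-1)*(s+E-k-x-1) < (s-1)*(s-2) + E*(E-1) - 2*i := by
    rcases le_or_gt k E with hkE | hkE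
    · nlinarith [mul_nonneg (show (0:ℤ) ≤ s-2-x by omega) (show (0:ℤ) ≤ E-k by omega),
        mul_nonneg (show (0:ℤ) ≤ s-2-x by omega) (show (0:ℤ) ≤ s-2-x by omega),
        mul_nonneg (show (0:ℤ) ≤ s-2-x by omega) (show (0:ℤ) ≤ k-2 by omega),
        mul_nonneg (show (0:ℤ) ≤ E-k by omega) (show (0:ℤ) ≤ k-2 by omega),
        mul_nonneg (show (0:ℤ) ≤ s+E-k-x-2 by omega) (show (0:ℤ) ≤ k-2 by omega),
        mul_nonneg (show (0:ℤ) ≤ s+E-k-x-2 by omega) (show (0:ℤ) ≤ s-2-x by omega)]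
    · nlinarith [sq_nonneg (s-E-2), sq_nonneg (s+E-2-k-x),
        mul_nonneg (show (0:ℤ) ≤ x-k by omega) (show (0:ℤ) ≤ k-E-1 by omega),
        mul_nonneg (show (0:ℤ) ≤ s-2-x by omega) (show (0:ℤ) ≤ k-E-1 by omega),
        mul_nonneg (show (0:ℤ) ≤ s+E-2-k-x by omega) (show (0:ℤ) ≤ k-E-1 by omega),
        mul_nonneg (show (0:ℤ) ≤ s+E-2-k-x by omega) (show (0:ℤ) ≤ s-2-x by omega),
        mul_nonneg (show (0:ℤ) ≤ s+E-2-k-x by omega) (show (0:ℤ) ≤ x-k by omega),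
        mul_nonneg (show (0:ℤ) ≤ s-2-x by omega) (show (0:ℤ) ≤ x-k by omega)]
  linarith

lemma W2 (a b : ℕ) (ha : 1 ≤ a) (hab : a ≤ b) :
    2 * (∑ j ∈ Finset.Ico a b, (j-1)) + (a-1)*(a-2) = (b-1)*(b-2) := by
  induction b, hab using Nat.le_induction with
  | base => simp
  | succ b hb ih =>
    rw [Finset.sum_Ico_succ_top hb]
    have hb' : (b-1)*(b-2) + 2*(b-1) = (b+1-1)*(b+1-2) := by
      cases b with
      | zero => omega
      | succ c =>
        cases c with
        | zero => simp
        | succ e => simp [Nat.succ_sub_one]; ring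
    linarith


set_option maxHeartbeats 1000000 in
/-- Let `7 ≤ ⌊d/2⌋ + 1 ≤ s ≤ d - 4`, `g_s(d) = C(s-1,2) + C(d-s,2)` and
`1 ≤ i ≤ d - s - 3`. If `s - 1 - C(d-s,2) + i > 0` (i.e. `C(d-s,2) < s - 1 + i`), then
`g_s(d) - i` is a gap in `R_d`. -/
theorem stmt13 (d s i : ℕ) (h7 : 7 ≤ d / 2 + 1) (hs1 : d / 2 + 1 ≤ s) (hs2 : s ≤ d - 4)
    (hi1 : 1 ≤ i) (hi2 : i ≤ d - s - 3)
    (hcond : Nat.choose (d - s) 2 < s - 1 + i) :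
    IsGap d (Nat.choose (s - 1) 2 + Nat.choose (d - s) 2 - i) := by
  have hd12 : 12 ≤ d := by omega
  have hsd : s + 4 ≤ d := by omega
  obtain ⟨E, rfl⟩ : ∃ E, d = s + E := ⟨d - s, by omega⟩
  have hEeq : s + E - s = E := by omega
  rw [hEeq] at hcond hi2 ⊢
  have hE4 : 4 ≤ E := by omega
  have hi3 : i + 3 ≤ E := by omega
  have hs7 : 7 ≤ s := by omega
  have hEs : E + 1 ≤ s := by omega
  have hc2E : 2 * Nat.choose E 2 = E*(E-1) := two_choose_two E
  have hc2s : 2 * Nat.choose (s-1) 2 = (s-1)*(s-2) := two_choose_two _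
  have hcondE : E*(E-1) + 4 ≤ 2*s + 2*i := by
    have hcond2 : 2*Nat.choose E 2 + 4 ≤ 2*s+2*i := by omega
    rw [hc2E] at hcond2
    exact hcond2
  have h12E : 2*E ≤ E*(E-1) := by
    calc 2*E = E*2 := Nat.mul_comm _ _
      _ ≤ E*(E-1) := Nat.mul_le_mul_left E (by omega)
  have hsbig : E + i + 3 ≤ s := by
    rcases le_or_gt 5 E with h5 | h5
    · have hq : 6*E ≤ E*(E-1) + 10 := by
        obtain ⟨c, rfl⟩ := Nat.exists_eq_add_of_le h5
        have heq5 : 5 + c - 1 = 4 + c := by omega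
        rw [heq5]; nlinarith
      linarith
    · omega
  have hiE2 : i ≤ Nat.choose E 2 := by
    have : 2*i ≤ 2*Nat.choose E 2 := by rw [hc2E]; linarith
    omega
  constructor
  · -- g ≤ choose (d-1) 2
    have hc2d : 2 * Nat.choose (s+E-1) 2 = (s+E-1)*(s+E-2) := two_choose_two _
    have key : (s-1)*(s-2) + E*(E-1) ≤ (s+E-1)*(s+E-2) := by
      zify [show 1 ≤ s by omega, show 2 ≤ s by omega, show 1 ≤ E by omega,
        show 1 ≤ s+E by omega, show 2 ≤ s+E by omega]
      nlinarith [mul_nonneg (show (0:ℤ) ≤ (E:ℤ) by positivity)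
        (show (0:ℤ) ≤ (s:ℤ)-1 by push_cast; omega)]
    -- conclude on choose level
    have h1 : 2*(Nat.choose (s-1) 2 + Nat.choose E 2) ≤ 2*Nat.choose (s+E-1) 2 := by
      rw [Nat.mul_add, hc2s, hc2E, hc2d]; exact key
    omega
  · rintro h ℓ hO hmult heq
    obtain ⟨h0, hposiff, hstep⟩ := hO
    have hpos : ∀ j, j < ℓ → 1 ≤ h j := fun j hj => (hposiff j).mpr hj
    have hgval : 2*(Nat.choose (s-1) 2 + Nat.choose E 2 - i) + 2*i
        = 2*Nat.choose (s-1) 2 + 2*Nat.choose E 2 := by omega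
    rw [hc2s, hc2E, ← heq] at hgval
    -- hgval : 2 * genus h ℓ + 2*i = (s-1)*(s-2) + E*(E-1)
    rcases Nat.lt_or_ge ℓ 2 with hl2 | hl2
    · interval_cases ℓ
      · simp [mult] at hmult; omega
      · rw [mult, Finset.sum_range_one, h0] at hmult; omega
    obtain ⟨x, rfl⟩ : ∃ x, ℓ = x + 1 := ⟨ℓ-1, by omega⟩
    have hx1 : 1 ≤ x := by omega
    have hmultx : ∑ j ∈ Finset.range (x+1), h j = s + E := hmult
    have hgenx : 2 * (∑ j ∈ Finset.range (x+1), (j-1) * h j) + 2*i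
        = (s-1)*(s-2) + E*(E-1) := hgval
    clear hmult hgval heq
    have hsplit0 : ∀ f : ℕ → ℕ, ∑ j ∈ Finset.range (x+1), f j
        = f 0 + ∑ j ∈ Finset.Ico 1 (x+1), f j := by
      intro f
      rw [Finset.range_eq_Ico,
        ← Finset.sum_Ico_consecutive f (by omega : (0:ℕ) ≤ 1) (by omega : 1 ≤ x+1)]
      simp
    rcases Nat.lt_or_ge x s with hxs | hxs
    · -- ℓ ≤ s : the main case
      have desc2 : ∀ j, 1 ≤ j → 2 ≤ h (j+1) → 2 ≤ h j := by
        intro j hj hh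
        by_contra hc
        push_neg at hc
        have h1 := hstep j hj
        rw [mac_self j (h j) (by omega)] at h1
        omega
      have desc3 : ∀ j, 2 ≤ j → 3 ≤ h (j+1) → 3 ≤ h j := by
        intro j hj hh
        by_contra hc
        push_neg at hc
        have h1 := hstep j (by omega)
        rw [mac_self j (h j) (by omega)] at h1
        omega
      have chain2 : ∀ t j, 1 ≤ j → 2 ≤ h (j+t) → 2 ≤ h j := by
        intro t
        induction t with
        | zero => intro j _ hh; simpa using hh
        | succ c ih =>
          intro j hj hh
          rw [Nat.add_succ] at hh
          exact ih j hj (desc2 (j+c) (by omega) hh)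
      have chain3 : ∀ t j, 2 ≤ j → 3 ≤ h (j+t) → 3 ≤ h j := by
        intro t
        induction t with
        | zero => intro j _ hh; simpa using hh
        | succ c ih =>
          intro j hj hh
          rw [Nat.add_succ] at hh
          exact ih j hj (desc3 (j+c) (by omega) hh)
      set k := Nat.findGreatest (fun j => 2 ≤ h j) x with hkdef
      set m := Nat.findGreatest (fun j => 3 ≤ h j ∧ 2 ≤ j) x with hmdef
      have hkx : k ≤ x := Nat.findGreatest_le x
      have hmx : m ≤ x := Nat.findGreatest_le x
      have hk_all : ∀ j, 1 ≤ j → j ≤ k → 2 ≤ h j := by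
        intro j h1 h2
        have hkP : 2 ≤ h k := Nat.findGreatest_of_ne_zero (m := k) hkdef.symm (by omega)
        have hc := chain2 (k - j) j h1
        rw [show j + (k-j) = k by omega] at hc
        exact hc hkP
      have hk_gt : ∀ j, k < j → j ≤ x → h j = 1 := by
        intro j hj hjx
        have hng : ¬ (2 ≤ h j) :=
          Nat.findGreatest_is_greatest (P := fun j => 2 ≤ h j) (n := x) (by omega) hjx
        have := hpos j (by omega)
        omega
      have hm_all : ∀ j, 2 ≤ j → j ≤ m → 3 ≤ h j := by
        intro j h1 h2
        have hmP : 3 ≤ h m ∧ 2 ≤ m :=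
          Nat.findGreatest_of_ne_zero (m := m) hmdef.symm (by omega)
        have hc := chain3 (m - j) j h1
        rw [show j + (m-j) = m by omega] at hc
        exact hc hmP.1
      have hm_gt : ∀ j, m < j → 2 ≤ j → j ≤ x → h j ≤ 2 := by
        intro j hj h2 hjx
        have hng : ¬ (3 ≤ h j ∧ 2 ≤ j) :=
          Nat.findGreatest_is_greatest (P := fun j => 3 ≤ h j ∧ 2 ≤ j) (n := x) (by omega) hjx
        omega
      have hm02 : m = 0 ∨ 2 ≤ m := by
        rcases Nat.eq_zero_or_pos m with h' | h'
        · exact Or.inl h'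
        · exact Or.inr (Nat.findGreatest_of_ne_zero (m := m) hmdef.symm (by omega) :
            3 ≤ h m ∧ 2 ≤ m).2
      have hmk : m ≤ k := by
        rcases hm02 with h' | h'
        · omega
        · have hmP : 3 ≤ h m ∧ 2 ≤ m :=
            Nat.findGreatest_of_ne_zero (m := m) hmdef.symm (by omega)
          exact Nat.le_findGreatest hmx (by omega)
      rcases Nat.eq_zero_or_pos k with hk0 | hk0
      · -- k = 0 : all entries are 1, multiplicity too small
        have hsum1 : ∑ j ∈ Finset.range (x+1), h j = 1 + x := by
          rw [hsplit0, h0]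
          have he : ∑ j ∈ Finset.Ico 1 (x+1), h j = ∑ j ∈ Finset.Ico 1 (x+1), 1 := by
            apply Finset.sum_congr rfl
            intro j hj
            simp only [Finset.mem_Ico] at hj
            exact hk_gt j (by omega) (by omega)
          rw [he]
          simp
        omega
      have h1ge2 : 2 ≤ h 1 := hk_all 1 le_rfl hk0
      rcases hm02 with hm0 | hm2
      · -- case m = 0 : exact genus computation
        have hblock2 : ∀ j, 2 ≤ j → j ≤ k → h j = 2 := by
          intro j ha hb
          have hu := hk_all j (by omega) hb
          have hv := hm_gt j (by omega) ha (by omega)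
          omega
        have hsplit5 : ∀ f : ℕ → ℕ, ∑ j ∈ Finset.range (x+1), f j
            = f 0 + f 1 + (∑ j ∈ Finset.Ico 2 (k+1), f j)
              + ∑ j ∈ Finset.Ico (k+1) (x+1), f j := by
          intro f
          rw [Finset.range_eq_Ico,
            ← Finset.sum_Ico_consecutive f (by omega : (0:ℕ) ≤ k+1) (by omega : k+1 ≤ x+1),
            ← Finset.sum_Ico_consecutive f (by omega : (0:ℕ) ≤ 2) (by omega : 2 ≤ k+1)]
          have h02 : ∑ j ∈ Finset.Ico 0 2, f j = f 0 + f 1 := by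
            rw [show (2:ℕ) = 1+1 from rfl, Finset.sum_Ico_succ_top (by omega)]
            simp
          rw [h02]
        have hb2 : ∑ j ∈ Finset.Ico 2 (k+1), h j = 2*(k-1) := by
          have he : ∑ j ∈ Finset.Ico 2 (k+1), h j = ∑ j ∈ Finset.Ico 2 (k+1), 2 := by
            apply Finset.sum_congr rfl
            intro j hj
            simp only [Finset.mem_Ico] at hj
            exact hblock2 j hj.1 (by omega)
          rw [he, Finset.sum_const, Nat.card_Ico, smul_eq_mul]
          omega
        have hb3 : ∑ j ∈ Finset.Ico (k+1) (x+1), h j = x - k := by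
          have he : ∑ j ∈ Finset.Ico (k+1) (x+1), h j = ∑ j ∈ Finset.Ico (k+1) (x+1), 1 := by
            apply Finset.sum_congr rfl
            intro j hj
            simp only [Finset.mem_Ico] at hj
            exact hk_gt j (by omega) (by omega)
          rw [he, Finset.sum_const, Nat.card_Ico, smul_eq_mul]
          omega
        have hmult5 : 1 + h 1 + 2*(k-1) + (x-k) = s + E := by
          rw [hsplit5 h, h0, hb2, hb3] at hmultx
          omega
        have hg2 : ∑ j ∈ Finset.Ico 2 (k+1), (j-1)*h j
            = 2 * ∑ j ∈ Finset.Ico 2 (k+1), (j-1) := by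
          have he : ∑ j ∈ Finset.Ico 2 (k+1), (j-1)*h j
              = ∑ j ∈ Finset.Ico 2 (k+1), (j-1)*2 := by
            apply Finset.sum_congr rfl
            intro j hj
            simp only [Finset.mem_Ico] at hj
            rw [hblock2 j hj.1 (by omega)]
          rw [he, ← Finset.sum_mul]
          ring
        have hg3 : ∑ j ∈ Finset.Ico (k+1) (x+1), (j-1)*h j
            = ∑ j ∈ Finset.Ico (k+1) (x+1), (j-1) := by
          apply Finset.sum_congr rfl
          intro j hj
          simp only [Finset.mem_Ico] at hj
          rw [hk_gt j (by omega) (by omega), mul_one]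
        have hw2 : 2 * (∑ j ∈ Finset.Ico 2 (k+1), (j-1)) = k*(k-1) := by
          have hw := W2 2 (k+1) (by omega) (by omega)
          rw [show k+1-1 = k by omega, show k+1-2 = k-1 by omega] at hw
          simpa using hw
        have hw3 : 2 * (∑ j ∈ Finset.Ico (k+1) (x+1), (j-1)) + k*(k-1) = x*(x-1) := by
          have hw := W2 (k+1) (x+1) (by omega) (by omega)
          rw [show k+1-1 = k by omega, show k+1-2 = k-1 by omega,
            show x+1-1 = x by omega, show x+1-2 = x-1 by omega] at hw
          exact hw
        have hgen5 : x*(x-1) + k*(k-1) + 2*i = (s-1)*(s-2) + E*(E-1) := by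
          rw [hsplit5 (fun j => (j-1)*h j)] at hgenx
          simp only [show (0:ℕ)-1 = 0 from rfl, Nat.zero_mul, show (1:ℕ)-1 = 0 from rfl,
            Nat.zero_add, Nat.add_zero] at hgenx
          rw [hg2, hg3] at hgenx
          linarith [hgenx, hw2, hw3]
        zify [show 1 ≤ x by omega, show 1 ≤ k by omega, show 1 ≤ s by omega,
          show 2 ≤ s by omega, show 1 ≤ E by omega] at hgen5
        rcases Nat.lt_or_ge x (s-1) with hxl | hxe
        · have hc := keyC0 (s:ℤ) E i x k (by exact_mod_cast hsbig) (by exact_mod_cast hi1)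
            (by exact_mod_cast hi3) (by positivity) (by exact_mod_cast hkx)
            (by omega) (by omega)
          linarith [hc, hgen5]
        · have hkE : k ≤ E := by omega
          have hA := keyA (E:ℤ) i k (by exact_mod_cast hi1) (by exact_mod_cast hi3)
            (by positivity) (by exact_mod_cast hkE)
          apply hA
          have hxz : (x:ℤ) = (s:ℤ)-1 := by omega
          rw [hxz] at hgen5
          ring_nf at hgen5 ⊢
          linarith [hgen5]
      · -- case m ≥ 2
        obtain ⟨S, hSdef⟩ : ∃ S', S' = ∑ j ∈ Finset.Ico 2 (m+1), (h j - 3) := ⟨_, rfl⟩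
        have hsplit6 : ∀ f : ℕ → ℕ, ∑ j ∈ Finset.range (x+1), f j
            = f 0 + f 1 + (∑ j ∈ Finset.Ico 2 (m+1), f j)
              + (∑ j ∈ Finset.Ico (m+1) (k+1), f j)
              + ∑ j ∈ Finset.Ico (k+1) (x+1), f j := by
          intro f
          rw [Finset.range_eq_Ico,
            ← Finset.sum_Ico_consecutive f (by omega : (0:ℕ) ≤ k+1) (by omega : k+1 ≤ x+1),
            ← Finset.sum_Ico_consecutive f (by omega : (0:ℕ) ≤ m+1) (by omega : m+1 ≤ k+1),
            ← Finset.sum_Ico_consecutive f (by omega : (0:ℕ) ≤ 2) (by omega : 2 ≤ m+1)]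
          have h02 : ∑ j ∈ Finset.Ico 0 2, f j = f 0 + f 1 := by
            rw [show (2:ℕ) = 1+1 from rfl, Finset.sum_Ico_succ_top (by omega)]
            simp
          rw [h02]
        have hbm : ∑ j ∈ Finset.Ico 2 (m+1), h j = 3*(m-1) + S := by
          have he : ∑ j ∈ Finset.Ico 2 (m+1), h j
              = ∑ j ∈ Finset.Ico 2 (m+1), (3 + (h j - 3)) := by
            apply Finset.sum_congr rfl
            intro j hj
            simp only [Finset.mem_Ico] at hj
            have := hm_all j hj.1 (by omega)
            omega
          rw [he, Finset.sum_add_distrib, Finset.sum_const, Nat.card_Ico, smul_eq_mul, ← hSdef]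
          omega
        have hblockmk : ∀ j, m < j → j ≤ k → h j = 2 := by
          intro j ha hb
          have hu := hk_all j (by omega) hb
          have hv := hm_gt j ha (by omega) (by omega)
          omega
        have hbmk : ∑ j ∈ Finset.Ico (m+1) (k+1), h j = 2*(k-m) := by
          have he : ∑ j ∈ Finset.Ico (m+1) (k+1), h j = ∑ j ∈ Finset.Ico (m+1) (k+1), 2 := by
            apply Finset.sum_congr rfl
            intro j hj
            simp only [Finset.mem_Ico] at hj
            exact hblockmk j (by omega) (by omega)
          rw [he, Finset.sum_const, Nat.card_Ico, smul_eq_mul]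
          omega
        have hbkx : ∑ j ∈ Finset.Ico (k+1) (x+1), h j = x - k := by
          have he : ∑ j ∈ Finset.Ico (k+1) (x+1), h j = ∑ j ∈ Finset.Ico (k+1) (x+1), 1 := by
            apply Finset.sum_congr rfl
            intro j hj
            simp only [Finset.mem_Ico] at hj
            exact hk_gt j (by omega) (by omega)
          rw [he, Finset.sum_const, Nat.card_Ico, smul_eq_mul]
          omega
        have hmult6 : 1 + h 1 + (3*(m-1) + S) + 2*(k-m) + (x-k) = s + E := by
          rw [hsplit6 h, h0, hbm, hbmk, hbkx] at hmultx
          omega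
        have hgm : ∑ j ∈ Finset.Ico 2 (m+1), (j-1)*h j
            ≤ 3 * (∑ j ∈ Finset.Ico 2 (m+1), (j-1)) + (m-1)*S := by
          have he : ∀ j ∈ Finset.Ico 2 (m+1), (j-1)*h j = (j-1)*3 + (j-1)*(h j - 3) := by
            intro j hj
            simp only [Finset.mem_Ico] at hj
            have h3 := hm_all j hj.1 (by omega)
            rw [← Nat.mul_add, show 3 + (h j - 3) = h j by omega]
          rw [Finset.sum_congr rfl he, Finset.sum_add_distrib]
          have t1 : ∑ j ∈ Finset.Ico 2 (m+1), (j-1)*3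
              = 3 * ∑ j ∈ Finset.Ico 2 (m+1), (j-1) := by
            rw [← Finset.sum_mul]; ring
          have t2 : ∑ j ∈ Finset.Ico 2 (m+1), (j-1)*(h j - 3) ≤ (m-1)*S := by
            rw [hSdef, Finset.mul_sum]
            apply Finset.sum_le_sum
            intro j hj
            simp only [Finset.mem_Ico] at hj
            exact Nat.mul_le_mul_right _ (by omega : j - 1 ≤ m - 1)
          omega
        have hgmk : ∑ j ∈ Finset.Ico (m+1) (k+1), (j-1)*h j
            = 2 * ∑ j ∈ Finset.Ico (m+1) (k+1), (j-1) := by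
          have he : ∑ j ∈ Finset.Ico (m+1) (k+1), (j-1)*h j
              = ∑ j ∈ Finset.Ico (m+1) (k+1), (j-1)*2 := by
            apply Finset.sum_congr rfl
            intro j hj
            simp only [Finset.mem_Ico] at hj
            rw [hblockmk j (by omega) (by omega)]
          rw [he, ← Finset.sum_mul]
          ring
        have hgkx : ∑ j ∈ Finset.Ico (k+1) (x+1), (j-1)*h j
            = ∑ j ∈ Finset.Ico (k+1) (x+1), (j-1) := by
          apply Finset.sum_congr rfl
          intro j hj
          simp only [Finset.mem_Ico] at hj
          rw [hk_gt j (by omega) (by omega), mul_one]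
        have hw2 : 2 * (∑ j ∈ Finset.Ico 2 (m+1), (j-1)) = m*(m-1) := by
          have hw := W2 2 (m+1) (by omega) (by omega)
          rw [show m+1-1 = m by omega, show m+1-2 = m-1 by omega] at hw
          simpa using hw
        have hwmk : 2 * (∑ j ∈ Finset.Ico (m+1) (k+1), (j-1)) + m*(m-1) = k*(k-1) := by
          have hw := W2 (m+1) (k+1) (by omega) (by omega)
          rw [show m+1-1 = m by omega, show m+1-2 = m-1 by omega,
            show k+1-1 = k by omega, show k+1-2 = k-1 by omega] at hw
          exact hw
        have hwkx : 2 * (∑ j ∈ Finset.Ico (k+1) (x+1), (j-1)) + k*(k-1) = x*(x-1) := by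
          have hw := W2 (k+1) (x+1) (by omega) (by omega)
          rw [show k+1-1 = k by omega, show k+1-2 = k-1 by omega,
            show x+1-1 = x by omega, show x+1-2 = x-1 by omega] at hw
          exact hw
        have hgen6 : (s-1)*(s-2) + E*(E-1)
            ≤ x*(x-1) + k*(k-1) + m*(m-1) + 2*((m-1)*S) + 2*i := by
          rw [hsplit6 (fun j => (j-1)*h j)] at hgenx
          simp only [show (0:ℕ)-1 = 0 from rfl, Nat.zero_mul, show (1:ℕ)-1 = 0 from rfl,
            Nat.zero_add, Nat.add_zero] at hgenx
          rw [hgmk, hgkx] at hgenx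
          linarith [hgm, hw2, hwmk, hwkx, hgenx]
        zify [show 1 ≤ x by omega, show 1 ≤ k by omega, show 1 ≤ m by omega,
          show 1 ≤ s by omega, show 2 ≤ s by omega, show 1 ≤ E by omega] at hgen6
        rcases Nat.lt_or_ge x (s-1) with hxl | hxe
        · have hc := keyC2 (s:ℤ) E i x k m S (by exact_mod_cast hsbig) (by exact_mod_cast hi1)
            (by exact_mod_cast hi3) (by exact_mod_cast hm2) (by exact_mod_cast hmk)
            (by exact_mod_cast hkx) (by omega) (by positivity) (by omega)
          linarith [hc, hgen6]
        · have hB := keyB (E:ℤ) m k S (by exact_mod_cast hm2) (by exact_mod_cast hmk)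
            (by positivity) (by omega)
          have hxz : (x:ℤ) = (s:ℤ)-1 := by omega
          rw [hxz] at hgen6
          have hs' : ((s:ℤ)-1)*((s:ℤ)-1-1) = ((s:ℤ)-1)*((s:ℤ)-2) := by ring
          rw [hs'] at hgen6
          have haux : ((E:ℤ)-1)*((E:ℤ)-2) + 2*((E:ℤ)-1) = (E:ℤ)*((E:ℤ)-1) := by ring
          have hiE' : (i:ℤ)+3 ≤ E := by exact_mod_cast hi3
          linarith [hB, hgen6, haux, hiE']
    · -- ℓ ≥ s + 1 : genus too large
      have hlow : ∑ j ∈ Finset.range (x+1), (j-1) * 1 ≤ ∑ j ∈ Finset.range (x+1), (j-1) * h j := by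
        apply Finset.sum_le_sum
        intro j hj
        exact Nat.mul_le_mul_left _ (hpos j (Finset.mem_range.mp hj))
      have hW : 2 * (∑ j ∈ Finset.Ico 1 (x+1), (j-1)) + 0 = x*(x-1) := by
        have hw := W2 1 (x+1) le_rfl (by omega)
        simpa using hw
      have hfull : ∑ j ∈ Finset.range (x+1), (j-1) = ∑ j ∈ Finset.Ico 1 (x+1), (j-1) := by
        rw [hsplit0]
        omega
      have hxx : s*(s-1) ≤ x*(x-1) := Nat.mul_le_mul (by omega) (by omega)
      simp only [mul_one] at hlow
      have hss : (s-1)*(s-2) + 2*(s-1) = s*(s-1) := by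
        rcases Nat.exists_eq_add_of_le hs7 with ⟨c, rfl⟩
        have e1 : 7+c-1 = 6+c := by omega
        have e2 : 7+c-2 = 5+c := by omega
        rw [e1, e2]; ring
      have hs1' : s - 1 + 1 = s := by omega
      linarith [hgenx, hlow, hW, hfull, hxx, hss, hcondE]
end
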